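/- Let $c_1, \dots, c_s$ be distinct real numbers satisfying $c_{s+1-i} = 1 - c_i$ for all $i$, with Lagrange basis polynomials $\ell_i$, weights $b_i = \int_0^1 \ell_i \neq 0$, and coefficients $A_{\tau,\sigma} = \sum_{i=1}^s \frac{1}{b_i}\left(\int_0^\tau \ell_i\right)\ell_i(\sigma)$. Let $g : [0,1] \to \mathbb{R}^N$ be integrable, $h \in \mathbb{R}$, $u_0, u_1 \in \mathbb{R}^N$, and $V : [0,1] \to \mathbb{R}^N$ satisfy $u_1 = u_0 + h\int_0^1 g(\sigma)\,d\sigma$ and $V(\tau) = u_0 + h\int_0^1 A_{\tau,\sigma}\, g(\sigma)\,d\sigma$ for all $\tau \in [0,1]$. Then $u_0 = u_1 - h\int_0^1 g(1-\sigma)\,d\sigma$ and, for all $\tau \in [0,1]$, $V(1-\tau) = u_1 - h\int_0^1 A_{\tau,\sigma}\, g(1-\sigma)\,d\sigma$; i.e., the transformed stages and endpoints of the collocation scheme also satisfy the scheme with $u_0, u_1$ exchanged and $h$ replaced by $-h$, so the method is symmetric. -/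

import Mathlib

open Matrix MeasureTheory

/-- Sum of evaluated Lagrange basis polynomials is 1. -/
lemma lag_sum_one {s : ℕ} (hs : 0 < s) (c : Fin s → ℝ) (hc : Function.Injective c) (σ : ℝ) :
    ∑ i : Fin s, ∏ j ∈ Finset.univ.erase i, (σ - c j) / (c i - c j) = 1 := by
  have hne : Nonempty (Fin s) := ⟨⟨0, hs⟩⟩
  have h := Lagrange.sum_basis (s := (Finset.univ : Finset (Fin s))) (v := c)
    hc.injOn Finset.univ_nonempty
  have h2 := congrArg (Polynomial.eval σ) h
  rw [Polynomial.eval_finset_sum, Polynomial.eval_one] at h2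
  rw [← h2]
  refine Finset.sum_congr rfl fun i _ => ?_
  rw [Lagrange.basis, Polynomial.eval_prod]
  refine Finset.prod_congr rfl fun j _ => ?_
  simp [Lagrange.basisDivisor]
  ring

theorem exponential_collocation_symmetric
    {N s : ℕ} (hs : 0 < s)
    (c : Fin s → ℝ) (hc : Function.Injective c)
    (hsym : ∀ i : Fin s, c i.rev = 1 - c i)
    (ℓ : Fin s → ℝ → ℝ)
    (hℓ : ∀ i τ, ℓ i τ = ∏ j ∈ Finset.univ.erase i, (τ - c j) / (c i - c j))
    (b : Fin s → ℝ) (hb : ∀ i, b i = ∫ τ in (0:ℝ)..1, ℓ i τ)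
    (hbne : ∀ i, b i ≠ 0)
    (A : ℝ → ℝ → ℝ)
    (hA : ∀ τ σ, A τ σ = ∑ i, (b i)⁻¹ * ((∫ α in (0:ℝ)..τ, ℓ i α) * ℓ i σ))
    (g : ℝ → (Fin N → ℝ)) (hg : IntervalIntegrable g MeasureTheory.volume 0 1)
    (h : ℝ) (u₀ u₁ : Fin N → ℝ) (V : ℝ → (Fin N → ℝ))
    (hu1 : u₁ = u₀ + h • ∫ σ in (0:ℝ)..1, g σ)
    (hV : ∀ τ ∈ Set.Icc (0:ℝ) 1, V τ = u₀ + h • ∫ σ in (0:ℝ)..1, A τ σ • g σ) :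
    u₀ = u₁ - h • (∫ σ in (0:ℝ)..1, g (1 - σ)) ∧
      ∀ τ ∈ Set.Icc (0:ℝ) 1,
        V (1 - τ) = u₁ - h • ∫ σ in (0:ℝ)..1, A τ σ • g (1 - σ) := by
  -- basic continuity of the ℓ i
  have hℓcont : ∀ i, Continuous (ℓ i) := by
    intro i
    have : ℓ i = fun τ => ∏ j ∈ Finset.univ.erase i, (τ - c j) / (c i - c j) :=
      funext (hℓ i)
    rw [this]
    exact continuous_finset_prod _ fun j _ => (continuous_id.sub continuous_const).div_const _
  have hℓint : ∀ i (a bb : ℝ), IntervalIntegrable (ℓ i) volume a bb := fun i a bb =>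
    (hℓcont i).intervalIntegrable a bb
  -- symmetry of the basis polynomials
  have hrevℓ : ∀ i σ, ℓ i.rev (1 - σ) = ℓ i σ := by
    intro i σ
    rw [hℓ, hℓ]
    have himg : Finset.univ.erase i.rev = (Finset.univ.erase i).image Fin.rev := by
      ext j
      constructor
      · intro hj
        rw [Finset.mem_image]
        refine ⟨j.rev, ?_, Fin.rev_rev j⟩
        rw [Finset.mem_erase]
        refine ⟨?_, Finset.mem_univ _⟩
        intro hh
        exact (Finset.mem_erase.mp hj).1 (by rw [← hh, Fin.rev_rev])
      · intro hj
        obtain ⟨k, hk, rfl⟩ := Finset.mem_image.mp hj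
        rw [Finset.mem_erase]
        refine ⟨fun hh => (Finset.mem_erase.mp hk).1 (Fin.rev_injective hh), Finset.mem_univ _⟩
    rw [himg, Finset.prod_image (fun x _ y _ hxy => Fin.rev_injective hxy)]
    refine Finset.prod_congr rfl fun j hj => ?_
    have hne : c i - c j ≠ 0 := sub_ne_zero.mpr
      (fun hh => (Finset.mem_erase.mp hj).1 ((hc hh).symm))
    have hne' : c j - c i ≠ 0 := sub_ne_zero.mpr
      (fun hh => (Finset.mem_erase.mp hj).1 (hc hh))
    rw [hsym, hsym]
    have e1 : 1 - σ - (1 - c j) = -(σ - c j) := by ring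
    have e2 : 1 - c i - (1 - c j) = -(c i - c j) := by ring
    rw [e1, e2, neg_div_neg_eq]
  -- symmetry of the weights
  have hbrev : ∀ i, b i.rev = b i := by
    intro i
    have hcomp := intervalIntegral.integral_comp_sub_left (a := (0:ℝ)) (b := 1)
      (fun τ => ℓ i.rev τ) 1
    simp only [sub_zero, sub_self] at hcomp
    rw [hb i.rev, hb i, ← hcomp]
    exact intervalIntegral.integral_congr fun τ _ => hrevℓ i τ
  -- partial integrals transform as ∫₀^{1-τ} ℓ_{rev i} = b i - ∫₀^τ ℓ i
  have hIrev : ∀ i (τ : ℝ), (∫ α in (0:ℝ)..(1 - τ), ℓ i.rev α)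
      = b i - ∫ α in (0:ℝ)..τ, ℓ i α := by
    intro i τ
    have hcomp := intervalIntegral.integral_comp_sub_left (a := τ) (b := 1)
      (fun α => ℓ i.rev α) 1
    simp only [sub_self] at hcomp
    have h1 : (∫ α in τ..1, ℓ i.rev (1 - α)) = ∫ α in τ..1, ℓ i α :=
      intervalIntegral.integral_congr fun α _ => hrevℓ i α
    have h2 : (∫ α in (0:ℝ)..1, ℓ i α) - (∫ α in (0:ℝ)..τ, ℓ i α)
        = ∫ α in τ..1, ℓ i α :=
      intervalIntegral.integral_interval_sub_left (hℓint i 0 1) (hℓint i 0 τ)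
    rw [← hcomp, h1, ← h2, hb i]
  -- key symmetry of the coefficients
  have hAsym : ∀ τ σ : ℝ, A (1 - τ) (1 - σ) = 1 - A τ σ := by
    intro τ σ
    rw [hA, hA]
    have hre : ∑ i : Fin s, (b i)⁻¹ * ((∫ α in (0:ℝ)..(1 - τ), ℓ i α) * ℓ i (1 - σ))
        = ∑ i : Fin s, (b i.rev)⁻¹ * ((∫ α in (0:ℝ)..(1 - τ), ℓ i.rev α) * ℓ i.rev (1 - σ)) :=
      (Fintype.sum_equiv (Fin.revPerm)
        (fun (i : Fin s) => (b i.rev)⁻¹ * ((∫ α in (0:ℝ)..(1 - τ), ℓ i.rev α) * ℓ i.rev (1 - σ)))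
        (fun (i : Fin s) => (b i)⁻¹ * ((∫ α in (0:ℝ)..(1 - τ), ℓ i α) * ℓ i (1 - σ)))
        (fun i => rfl)).symm
    rw [hre]
    have hterm : ∀ i : Fin s,
        (b i.rev)⁻¹ * ((∫ α in (0:ℝ)..(1 - τ), ℓ i.rev α) * ℓ i.rev (1 - σ))
        = ℓ i σ - (b i)⁻¹ * ((∫ α in (0:ℝ)..τ, ℓ i α) * ℓ i σ) := by
      intro i
      rw [hbrev, hIrev, hrevℓ, sub_mul, mul_sub, ← mul_assoc,
        inv_mul_cancel₀ (hbne i), one_mul]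
    rw [Finset.sum_congr rfl fun i _ => hterm i, Finset.sum_sub_distrib]
    have hone : ∑ i : Fin s, ℓ i σ = 1 := by
      rw [Finset.sum_congr rfl fun i _ => hℓ i σ]
      exact lag_sum_one hs c hc σ
    rw [hone]
  -- continuity of σ ↦ A τ σ
  have hAcont : ∀ τ, Continuous (fun σ => A τ σ) := by
    intro τ
    have : (fun σ => A τ σ)
        = fun σ => ∑ i, (b i)⁻¹ * ((∫ α in (0:ℝ)..τ, ℓ i α) * ℓ i σ) :=
      funext fun σ => hA τ σ
    rw [this]
    exact continuous_finset_sum _ fun i _ =>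
      continuous_const.mul (continuous_const.mul (hℓcont i))
  -- integrability facts
  have hgIcc : IntegrableOn g (Set.Icc (0:ℝ) 1) volume := by
    rw [integrableOn_Icc_iff_integrableOn_Ioc]
    exact (intervalIntegrable_iff_integrableOn_Ioc_of_le zero_le_one).mp hg
  have hsmulint : ∀ (φ : ℝ → ℝ), Continuous φ → ∀ (G : ℝ → Fin N → ℝ),
      IntegrableOn G (Set.Icc (0:ℝ) 1) volume →
      IntervalIntegrable (fun σ => φ σ • G σ) volume 0 1 := by
    intro φ hφ G hG
    rw [intervalIntegrable_iff_integrableOn_Ioc_of_le zero_le_one]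
    exact (hG.continuousOn_smul hφ.continuousOn isCompact_Icc).mono_set
      Set.Ioc_subset_Icc_self
  have hg1 : IntervalIntegrable (fun σ => g (1 - σ)) volume 0 1 := by
    simpa using (hg.comp_sub_left 1).symm
  have hg1Icc : IntegrableOn (fun σ => g (1 - σ)) (Set.Icc (0:ℝ) 1) volume := by
    rw [integrableOn_Icc_iff_integrableOn_Ioc]
    exact (intervalIntegrable_iff_integrableOn_Ioc_of_le zero_le_one).mp hg1
  -- ∫₀¹ g(1-σ) = ∫₀¹ g
  have hgflip : (∫ σ in (0:ℝ)..1, g (1 - σ)) = ∫ σ in (0:ℝ)..1, g σ := by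
    have := intervalIntegral.integral_comp_sub_left (a := (0:ℝ)) (b := 1) g 1
    simpa using this
  constructor
  · rw [hgflip, hu1]
    abel
  · intro τ hτ
    have hτ' : (1 - τ) ∈ Set.Icc (0:ℝ) 1 := ⟨by linarith [hτ.2], by linarith [hτ.1]⟩
    rw [hV _ hτ']
    -- flip the integration variable
    have hflip : (∫ σ in (0:ℝ)..1, A (1 - τ) σ • g σ)
        = ∫ σ in (0:ℝ)..1, A (1 - τ) (1 - σ) • g (1 - σ) := by
      have := intervalIntegral.integral_comp_sub_left (a := (0:ℝ)) (b := 1)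
        (fun σ => A (1 - τ) σ • g σ) 1
      simpa using this.symm
    have hsplit : (∫ σ in (0:ℝ)..1, A (1 - τ) (1 - σ) • g (1 - σ))
        = (∫ σ in (0:ℝ)..1, g (1 - σ)) - ∫ σ in (0:ℝ)..1, A τ σ • g (1 - σ) := by
      have hcong : (∫ σ in (0:ℝ)..1, A (1 - τ) (1 - σ) • g (1 - σ))
          = ∫ σ in (0:ℝ)..1, (g (1 - σ) - A τ σ • g (1 - σ)) := by
        refine intervalIntegral.integral_congr fun σ _ => ?_
        rw [hAsym τ σ, sub_smul, one_smul]
      rw [hcong]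
      exact intervalIntegral.integral_sub hg1
        (hsmulint _ (hAcont τ) _ hg1Icc)
    rw [hflip, hsplit, hgflip, hu1, smul_sub]
    abel
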